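/- Let H be a Hilbert space, k > 0 a real number, and a⁺(u,v) a continuous symmetric bilinear form on H that is coercive with coercivity constant at least min(1, k²+1) with respect to a norm |||v|||² = (k²+1)‖v‖₀² + |v|₁² (where ‖·‖₀ ≤ C|·|₁ on H). Then for every bounded linear functional given by f ∈ H via v ↦ (f,v)₀, the unique solution ũ of a⁺(ũ,v) = (f,v)₀ satisfies (k²+1)‖ũ‖₀ + (k+1)|ũ|₁ ≤ C‖f‖₀ with C independent of k. -/
import Mathlib


/-- Abstract Lemma 2.3: stability of the coercive auxiliary problem
`a⁺(ũ,v) = B1 ũ v + k² B0 ũ v = (f,v)₀`, with constant independent of `k`. -/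
theorem stmt_0 (C0 : ℝ) (hC0 : 0 < C0) :
    ∃ C : ℝ, 0 < C ∧ ∀ (H : Type) (B0 B1 : H → H → ℝ),
      (∀ v, 0 ≤ B0 v v) → (∀ v, 0 ≤ B1 v v) →
      (∀ u v, B0 u v ≤ Real.sqrt (B0 u u) * Real.sqrt (B0 v v)) →
      (∀ v, Real.sqrt (B0 v v) ≤ C0 * Real.sqrt (B1 v v)) →
      ∀ (k : ℝ), 0 < k → ∀ (f utld : H),
      (∀ v, B1 utld v + k ^ 2 * B0 utld v = B0 f v) →
      (k ^ 2 + 1) * Real.sqrt (B0 utld utld) + (k + 1) * Real.sqrt (B1 utld utld)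
        ≤ C * Real.sqrt (B0 f f) := by
  refine ⟨C0 ^ 2 + C0 + 2, by positivity, ?_⟩
  intro H B0 B1 h0 h1 hCS hF k hk f u hsol
  set a := Real.sqrt (B0 u u) with ha
  set b := Real.sqrt (B1 u u) with hb
  set F := Real.sqrt (B0 f f) with hFdef
  have hane : 0 ≤ a := Real.sqrt_nonneg _
  have hbne : 0 ≤ b := Real.sqrt_nonneg _
  have hFne : 0 ≤ F := Real.sqrt_nonneg _
  have ha2 : a ^ 2 = B0 u u := Real.sq_sqrt (h0 u)
  have hb2 : b ^ 2 = B1 u u := Real.sq_sqrt (h1 u)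
  have hab : a ≤ C0 * b := hF u
  have hkey : b ^ 2 + k ^ 2 * a ^ 2 ≤ F * a := by
    rw [ha2, hb2]
    have := hsol u
    have hcs := hCS f u
    rw [mul_comm] at hcs
    linarith
  rcases eq_or_lt_of_le hane with hA | hA
  · -- a = 0, hence b = 0
    have hb0 : b = 0 := by nlinarith
    rw [← hA, hb0]
    have : (0:ℝ) ≤ (C0 ^ 2 + C0 + 2) * F := by positivity
    linarith
  · -- a > 0
    have hb0 : 0 < b := by nlinarith
    have hka : k ^ 2 * a ≤ F := by nlinarith
    have hbF : b ≤ C0 * F := by nlinarith [mul_le_mul_of_nonneg_left hab hFne]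
    have haF : a ≤ C0 ^ 2 * F := by nlinarith
    have hkb : 2 * (k * b) ≤ F := by nlinarith [sq_nonneg (k * a - b)]
    nlinarith
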